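/- Let k be a commutative ring, let f be a function from the positive integers to the positive integers, let B be the free nonunital associative k-algebra on two generators x and y (the nonunital semigroup algebra over k of the free semigroup on {x, y}), and let A be the nonunital k-subalgebra of B generated by the monomials x * y^n * x^{f(n)} for n ≥ 1. Then A is a free nonunital associative k-algebra on this countably infinite family of monomials (the natural homomorphism from the free nonunital associative k-algebra on countably many generators sending the n-th generator to x * y^n * x^{f(n)} is injective with image A), and A has the ideal extension property in B: every two-sided ideal I of A equals the intersection of A with the two-sided ideal of B generated by I. -/

import Mathlib

/-- `spow a n` is the `n`-th power `aⁿ` of an element of a semigroup, for `n ≥ 1`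
(with the junk value `a` at `n = 0`). -/
def spow {M : Type*} [Semigroup M] (a : M) : ℕ → M
  | 0 => a
  | 1 => a
  | n + 2 => spow a (n + 1) * a

/-- The two-sided ideal of a nonunital ring generated by a set. -/
def TwoSidedIdeal.span' {R : Type*} [NonUnitalNonAssocRing R] (s : Set R) :
    TwoSidedIdeal R :=
  sInf {I : TwoSidedIdeal R | s ⊆ I}

/-- The word `x * yⁿ * x^(f n)` in the free semigroup on `X`. -/
def malcevWord {X : Type*} (x y : X) (f : ℕ → ℕ) (n : ℕ) : FreeSemigroup X :=
  FreeSemigroup.of x * spow (FreeSemigroup.of y) n * spow (FreeSemigroup.of x) (f n)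

/-- The nonunital subalgebra of the free nonunital associative `k`-algebra on `X`
(realized as the nonunital semigroup algebra of the free semigroup on `X`)
generated by the monomials `x * yⁿ * x^(f n)` for `n ≥ 1`. -/
noncomputable def malcevSubalgebra (k : Type*) [CommRing k] {X : Type*} (x y : X) (f : ℕ → ℕ) :
    NonUnitalSubalgebra k (MonoidAlgebra k (FreeSemigroup X)) :=
  NonUnitalAlgebra.adjoin k
    {m : MonoidAlgebra k (FreeSemigroup X) | ∃ n, 1 ≤ n ∧
      m = MonoidAlgebra.single (malcevWord x y f n) 1}

/-- The natural homomorphism from the free nonunital associative `k`-algebra on the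
countably many generators `{n : ℕ // 1 ≤ n}` to the free nonunital associative
`k`-algebra on `{x, y}`, sending the `n`-th generator to `x * yⁿ * x^(f n)`:
it is induced by `Finsupp.mapDomain` along the corresponding semigroup homomorphism. -/
noncomputable def malcevHom (k : Type*) [CommRing k] {X : Type*} (x y : X)
    (f : ℕ → ℕ) :
    MonoidAlgebra k (FreeSemigroup {n : ℕ // 1 ≤ n}) →
      MonoidAlgebra k (FreeSemigroup X) :=
  fun a => MonoidAlgebra.ofCoeff (Finsupp.mapDomain
    (FreeSemigroup.lift (fun p : {n : ℕ // 1 ≤ n} => malcevWord x y f p.1)) a.coeff)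

namespace MalcevAux


variable {X : Type*} (x y : X) (f : ℕ → ℕ)

def codeL (n : ℕ) : List X := x :: (List.replicate n y ++ List.replicate (f n) x)

def Lang : Set (List X) :=
  {l | ∃ ns : List ℕ, ns ≠ [] ∧ (∀ n ∈ ns, 1 ≤ n) ∧ l = (ns.map (codeL x y f)).flatten}

variable {x y f}

lemma rep_cancel {c d : X} (hdc : d ≠ c) :
    ∀ (a b : ℕ) (t t' : List X),
      List.replicate a c ++ d :: t = List.replicate b c ++ d :: t' → a = b ∧ t = t'
  | 0, 0, t, t', h => by simpa using h
  | 0, b + 1, t, t', h => by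
      rw [List.replicate_succ] at h
      simp only [List.replicate_zero, List.nil_append, List.cons_append, List.cons.injEq] at h
      exact absurd h.1 hdc
  | a + 1, 0, t, t', h => by
      rw [List.replicate_succ] at h
      simp only [List.replicate_zero, List.nil_append, List.cons_append, List.cons.injEq] at h
      exact absurd h.1.symm hdc
  | a + 1, b + 1, t, t', h => by
      rw [List.replicate_succ, List.replicate_succ] at h
      simp only [List.cons_append, List.cons.injEq] at h
      obtain ⟨h1, h2⟩ := rep_cancel hdc a b t t' h.2
      exact ⟨by omega, h2⟩

lemma code_prefix (hxy : x ≠ y) {n m : ℕ} (hfn : 1 ≤ f n) (hfm : 1 ≤ f m)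
    {t t' : List X} (h : codeL x y f n ++ t = codeL x y f m ++ t') : n = m ∧ t = t' := by
  obtain ⟨fn, hfn'⟩ : ∃ a, f n = a + 1 := ⟨f n - 1, by omega⟩
  obtain ⟨fm, hfm'⟩ : ∃ a, f m = a + 1 := ⟨f m - 1, by omega⟩
  unfold codeL at h
  rw [hfn', hfm'] at h
  simp only [List.replicate_succ, List.cons_append, List.append_assoc, List.cons.injEq,
    true_and] at h
  obtain ⟨hnm, ht⟩ := rep_cancel hxy n m _ _ h
  refine ⟨hnm, ?_⟩
  subst hnm
  have : fn = fm := by omega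
  subst this
  exact List.append_cancel_left ht


lemma seek_xy (hxy : x ≠ y) :
    ∀ (a b : ℕ) (r p q : List X), (r = [] ∨ ∃ r', r = x :: r') →
      List.replicate a y ++ (List.replicate b x ++ r) = p ++ x :: y :: q →
      ∃ p', p = List.replicate a y ++ (List.replicate b x ++ p') ∧ r = p' ++ x :: y :: q
  | a + 1, b, r, [], q, hr, h => by
      rw [List.replicate_succ] at h
      simp only [List.cons_append, List.nil_append, List.cons.injEq] at h
      exact absurd h.1.symm hxy
  | a + 1, b, r, hd :: p₁, q, hr, h => by
      rw [List.replicate_succ] at h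
      simp only [List.cons_append, List.cons.injEq] at h
      obtain ⟨p', hp, hrq⟩ := seek_xy hxy a b r p₁ q hr h.2
      exact ⟨p', by rw [List.replicate_succ, List.cons_append, hp, ← h.1], hrq⟩
  | 0, 0, r, p, q, hr, h => ⟨p, by simp, by simpa using h⟩
  | 0, b + 1, r, [], q, hr, h => by
      rw [List.replicate_succ] at h
      simp only [List.replicate_zero, List.nil_append, List.cons_append, List.cons.injEq,
        true_and] at h
      cases b with
      | zero =>
          simp only [List.replicate_zero, List.nil_append] at h
          rcases hr with hr | ⟨r', hr⟩
          · rw [hr] at h; exact absurd h (by simp)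
          · rw [hr] at h
            simp only [List.cons.injEq] at h
            exact absurd h.1 hxy
      | succ c =>
          rw [List.replicate_succ] at h
          simp only [List.cons_append, List.cons.injEq] at h
          exact absurd h.1 hxy
  | 0, b + 1, r, hd :: p₁, q, hr, h => by
      rw [List.replicate_succ] at h
      simp only [List.replicate_zero, List.nil_append, List.cons_append, List.cons.injEq] at h
      obtain ⟨p', hp, hrq⟩ := seek_xy hxy 0 b r p₁ q hr (by simpa using h.2)
      simp only [List.replicate_zero, List.nil_append] at hp
      refine ⟨p', ?_, hrq⟩
      rw [List.replicate_succ]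
      simp only [List.replicate_zero, List.nil_append, List.cons_append, List.cons.injEq]
      exact ⟨h.1.symm, hp⟩

lemma code_mem {n : ℕ} (hn : 1 ≤ n) : codeL x y f n ∈ Lang x y f :=
  ⟨[n], by simp, by simpa using hn, by simp⟩

lemma lang_append {l l' : List X} (h : l ∈ Lang x y f) (h' : l' ∈ Lang x y f) :
    l ++ l' ∈ Lang x y f := by
  obtain ⟨ns, hne, h1, rfl⟩ := h
  obtain ⟨ms, hne', h1', rfl⟩ := h'
  refine ⟨ns ++ ms, by simp [hne], ?_, by simp⟩
  intro n hn
  rcases List.mem_append.1 hn with h | h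
  exacts [h1 n h, h1' n h]

lemma lang_head {l : List X} (h : l ∈ Lang x y f) : ∃ q, l = x :: y :: q := by
  obtain ⟨ns, hne, h1, rfl⟩ := h
  cases ns with
  | nil => exact absurd rfl hne
  | cons n ns' =>
      obtain ⟨c, hc⟩ : ∃ c, n = c + 1 := ⟨n - 1, by have := h1 n (by simp); omega⟩
      refine ⟨List.replicate c y ++ List.replicate (f n) x ++ (ns'.map (codeL x y f)).flatten, ?_⟩
      simp only [List.map_cons, List.flatten_cons, codeL, hc, List.replicate_succ]
      simp

lemma lang_ne_nil {l : List X} (h : l ∈ Lang x y f) : l ≠ [] := by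
  obtain ⟨q, rfl⟩ := lang_head h; simp

lemma boundary_aux (hxy : x ≠ y) :
    ∀ (ns : List ℕ), ns ≠ [] → (∀ n ∈ ns, 1 ≤ n) →
    ∀ p q : List X, (ns.map (codeL x y f)).flatten = p ++ x :: y :: q →
    (p = [] ∨ p ∈ Lang x y f) ∧ x :: y :: q ∈ Lang x y f := by
  intro ns
  induction ns with
  | nil => intro h; exact absurd rfl h
  | cons n ns' ih =>
      intro _ h1 p q h
      have hn : 1 ≤ n := h1 n (by simp)
      have hmem : ((n :: ns').map (codeL x y f)).flatten ∈ Lang x y f :=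
        ⟨n :: ns', by simp, h1, rfl⟩
      cases p with
      | nil =>
          refine ⟨Or.inl rfl, ?_⟩
          simp only [List.nil_append] at h
          rwa [h] at hmem
      | cons hd p₁ =>
          simp only [List.map_cons, List.flatten_cons, codeL, List.cons_append,
            List.append_assoc, List.cons.injEq] at h
          obtain ⟨hhd, h2⟩ := h
          have hr : (ns'.map (codeL x y f)).flatten = [] ∨
              ∃ r', (ns'.map (codeL x y f)).flatten = x :: r' := by
            cases ns' with
            | nil => exact Or.inl (by simp)
            | cons m ms =>
                obtain ⟨q', hq'⟩ := lang_head (x := x) (y := y) (f := f)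
                  ⟨m :: ms, by simp, fun n hn => h1 n (by simp [hn]), rfl⟩
                exact Or.inr ⟨y :: q', hq'⟩
          obtain ⟨p', hp, hrest⟩ := seek_xy hxy n (f n) _ p₁ q hr h2
          have hpform : hd :: p₁ = codeL x y f n ++ p' := by
            rw [hp, ← hhd]
            simp only [codeL, List.cons_append, List.append_assoc]
          cases ns' with
          | nil =>
              simp only [List.map_nil, List.flatten_nil] at hrest
              exact absurd hrest.symm (by simp)
          | cons m ms =>
              obtain ⟨hp', hxyq⟩ := ih (by simp) (fun n hn => h1 n (by simp [hn])) p' q hrest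
              refine ⟨Or.inr ?_, hxyq⟩
              rcases hp' with rfl | hp'
              · rw [hpform, List.append_nil]; exact code_mem hn
              · rw [hpform]; exact lang_append (code_mem hn) hp'

lemma boundary (hxy : x ≠ y) {l : List X} (hl : l ∈ Lang x y f) {p q : List X}
    (h : l = p ++ x :: y :: q) :
    (p = [] ∨ p ∈ Lang x y f) ∧ x :: y :: q ∈ Lang x y f := by
  obtain ⟨ns, hne, h1, rfl⟩ := hl
  exact boundary_aux hxy ns hne h1 p q h

lemma drop_prefix_aux (hxy : x ≠ y) (hf1 : ∀ n, 1 ≤ n → 1 ≤ f n) :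
    ∀ (ns : List ℕ), ns ≠ [] → (∀ n ∈ ns, 1 ≤ n) →
    ∀ v : List X, (ns.map (codeL x y f)).flatten ++ v ∈ Lang x y f →
    v = [] ∨ v ∈ Lang x y f := by
  intro ns
  induction ns with
  | nil => intro h; exact absurd rfl h
  | cons n ns' ih =>
      intro _ h1 v hv
      obtain ⟨ms, hne', h1', heq⟩ := hv
      cases ms with
      | nil => exact absurd rfl hne'
      | cons m ms' =>
          simp only [List.map_cons, List.flatten_cons, List.append_assoc] at heq
          obtain ⟨hnm, heq2⟩ := code_prefix hxy (hf1 n (h1 n (by simp)))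
            (hf1 m (h1' m (by simp))) heq
          cases ns' with
          | nil =>
              simp only [List.map_nil, List.flatten_nil, List.nil_append] at heq2
              cases ms' with
              | nil => left; simpa using heq2
              | cons m' ms'' =>
                  right
                  rw [heq2]
                  exact ⟨m' :: ms'', by simp, fun n hn => h1' n (by simp [hn]), rfl⟩
          | cons n₂ ns'' =>
              refine ih (by simp) (fun n hn => h1 n (by simp [hn])) v ?_
              rw [heq2]
              have : ms' ≠ [] := by
                rintro rfl
                simp only [List.map_nil, List.flatten_nil] at heq2
                have := congrArg List.length heq2
                simp only [List.length_append, List.map_cons, List.flatten_cons, codeL] at this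
                simp at this
              exact ⟨ms', this, fun n hn => h1' n (by simp [hn]), rfl⟩

lemma flatten_inj (hxy : x ≠ y) (hf1 : ∀ n, 1 ≤ n → 1 ≤ f n) :
    ∀ (ns ms : List ℕ), (∀ n ∈ ns, 1 ≤ n) → (∀ n ∈ ms, 1 ≤ n) →
    (ns.map (codeL x y f)).flatten = (ms.map (codeL x y f)).flatten → ns = ms := by
  intro ns
  induction ns with
  | nil =>
      intro ms _ _ h
      cases ms with
      | nil => rfl
      | cons m ms' => exact absurd h.symm (by simp [codeL])
  | cons n ns' ih =>
      intro ms h1 h2 h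
      cases ms with
      | nil => exact absurd h (by simp [codeL])
      | cons m ms' =>
          simp only [List.map_cons, List.flatten_cons] at h
          obtain ⟨hnm, ht⟩ := code_prefix hxy (hf1 n (h1 n (by simp)))
            (hf1 m (h2 m (by simp))) h
          rw [hnm, ih ms' (fun n hn => h1 n (by simp [hn])) (fun n hn => h2 n (by simp [hn])) ht]



def toL {α : Type*} (s : FreeSemigroup α) : List α := s.head :: s.tail

lemma toL_mul {α : Type*} (a b : FreeSemigroup α) : toL (a * b) = toL a ++ toL b := rfl

lemma toL_injective {α : Type*} : Function.Injective (toL (α := α)) := by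
  rintro ⟨h, t⟩ ⟨h', t'⟩ heq
  simpa [toL, FreeSemigroup.ext_iff] using heq

lemma toL_of {α : Type*} (a : α) : toL (FreeSemigroup.of a) = [a] := rfl

lemma toL_ne_nil {α : Type*} (s : FreeSemigroup α) : toL s ≠ [] := by simp [toL]

lemma toL_spow {α : Type*} (c : α) : ∀ n : ℕ, 1 ≤ n →
    toL (spow (FreeSemigroup.of c) n) = List.replicate n c
  | 1, _ => rfl
  | n + 2, _ => by
      rw [show spow (FreeSemigroup.of c) (n + 2)
          = spow (FreeSemigroup.of c) (n + 1) * FreeSemigroup.of c from rfl,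
        toL_mul, toL_spow c (n + 1) (by omega), toL_of, ← List.replicate_succ']

variable {X : Type*} {x y : X} {f : ℕ → ℕ}

lemma toL_malcevWord {n : ℕ} (hn : 1 ≤ n) (hfn : 1 ≤ f n) :
    toL (malcevWord x y f n) = codeL x y f n := by
  unfold malcevWord codeL
  rw [toL_mul, toL_mul, toL_of, toL_spow _ _ hn, toL_spow _ _ hfn]
  simp

/-- The semigroup homomorphism underlying `malcevHom`. -/
def phi (x y : X) (f : ℕ → ℕ) : FreeSemigroup {n : ℕ // 1 ≤ n} →ₙ* FreeSemigroup X :=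
  FreeSemigroup.lift (fun p : {n : ℕ // 1 ≤ n} => malcevWord x y f p.1)

lemma toL_phi (hf1 : ∀ n, 1 ≤ n → 1 ≤ f n) (g : FreeSemigroup {n : ℕ // 1 ≤ n}) :
    toL (phi x y f g) = ((toL g).map (fun p : {n : ℕ // 1 ≤ n} => codeL x y f p.1)).flatten := by
  induction g using FreeSemigroup.recOnMul with
  | ih1 p =>
      rw [phi, FreeSemigroup.lift_of, toL_malcevWord p.2 (hf1 p.1 p.2), toL_of]
      simp
  | ih2 p g _ ih =>
      rw [map_mul, toL_mul, toL_mul, ih, phi, FreeSemigroup.lift_of,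
        toL_malcevWord p.2 (hf1 p.1 p.2), toL_of]
      simp


lemma exists_word : ∀ (ns : List ℕ), ns ≠ [] → (∀ n ∈ ns, 1 ≤ n) →
    ∃ w : FreeSemigroup {n : ℕ // 1 ≤ n}, (toL w).map Subtype.val = ns
  | [], h, _ => absurd rfl h
  | [n], _, h1 => ⟨FreeSemigroup.of ⟨n, h1 n (by simp)⟩, rfl⟩
  | n :: m :: ns, _, h1 => by
      obtain ⟨w, hw⟩ := exists_word (m :: ns) (by simp) (fun p hp => h1 p (by simp [hp]))
      exact ⟨FreeSemigroup.of ⟨n, h1 n (by simp)⟩ * w, by rw [toL_mul, toL_of]; simp [hw]⟩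

lemma mem_range_phi (hf1 : ∀ n, 1 ≤ n → 1 ≤ f n) {g : FreeSemigroup X} :
    g ∈ Set.range ⇑(phi x y f) ↔ toL g ∈ Lang x y f := by
  constructor
  · rintro ⟨w, rfl⟩
    refine ⟨(toL w).map Subtype.val, by simp [toL], ?_, ?_⟩
    · intro n hn
      obtain ⟨p, _, rfl⟩ := List.mem_map.1 hn
      exact p.2
    · rw [toL_phi hf1, List.map_map]
      rfl
  · rintro ⟨ns, hne, h1, heq⟩
    obtain ⟨w, hw⟩ := exists_word ns hne h1
    refine ⟨w, toL_injective ?_⟩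
    rw [toL_phi hf1, heq, ← hw, List.map_map]
    rfl

lemma range_phi_mul {s t : FreeSemigroup X} (hs : s ∈ Set.range ⇑(phi x y f))
    (ht : t ∈ Set.range ⇑(phi x y f)) : s * t ∈ Set.range ⇑(phi x y f) := by
  obtain ⟨a, rfl⟩ := hs
  obtain ⟨b, rfl⟩ := ht
  exact ⟨a * b, map_mul _ _ _⟩

lemma mul_left_mem (hxy : x ≠ y) (hf1 : ∀ n, 1 ≤ n → 1 ≤ f n) {s : FreeSemigroup X}
    (hs : s ∈ Set.range ⇑(phi x y f)) (u : FreeSemigroup X) :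
    u * s ∈ Set.range ⇑(phi x y f) ↔ u ∈ Set.range ⇑(phi x y f) := by
  have hsl : toL s ∈ Lang x y f := (mem_range_phi hf1).1 hs
  rw [mem_range_phi hf1, mem_range_phi hf1, toL_mul]
  constructor
  · intro h
    obtain ⟨q, hq⟩ := lang_head hsl
    rw [hq] at h
    rcases (boundary hxy h rfl).1 with h0 | h0
    · exact absurd h0 (toL_ne_nil u)
    · exact h0
  · intro h
    exact lang_append h hsl

lemma mul_right_mem (hxy : x ≠ y) (hf1 : ∀ n, 1 ≤ n → 1 ≤ f n) {s : FreeSemigroup X}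
    (hs : s ∈ Set.range ⇑(phi x y f)) (v : FreeSemigroup X) :
    s * v ∈ Set.range ⇑(phi x y f) ↔ v ∈ Set.range ⇑(phi x y f) := by
  have hsl : toL s ∈ Lang x y f := (mem_range_phi hf1).1 hs
  rw [mem_range_phi hf1, mem_range_phi hf1, toL_mul]
  constructor
  · intro h
    obtain ⟨ns, hne, h1, heq⟩ := hsl
    rw [heq] at h
    rcases drop_prefix_aux hxy hf1 ns hne h1 (toL v) h with h0 | h0
    · exact absurd h0 (toL_ne_nil v)
    · exact h0
  · intro h
    exact lang_append hsl h

lemma mul_mid_mem (hxy : x ≠ y) (hf1 : ∀ n, 1 ≤ n → 1 ≤ f n) {s : FreeSemigroup X}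
    (hs : s ∈ Set.range ⇑(phi x y f)) (u v : FreeSemigroup X) :
    u * s * v ∈ Set.range ⇑(phi x y f) ↔
      u ∈ Set.range ⇑(phi x y f) ∧ v ∈ Set.range ⇑(phi x y f) := by
  constructor
  · intro h
    have h' : u * (s * v) ∈ Set.range ⇑(phi x y f) := by rwa [← mul_assoc]
    have hsl : toL s ∈ Lang x y f := (mem_range_phi hf1).1 hs
    obtain ⟨q, hq⟩ := lang_head hsl
    have hl : toL u ++ (x :: y :: (q ++ toL v)) ∈ Lang x y f := by
      have h2 := (mem_range_phi hf1).1 h'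
      rw [toL_mul, toL_mul, hq] at h2
      simpa using h2
    obtain ⟨hu, hsv⟩ := boundary hxy hl rfl
    have hu' : u ∈ Set.range ⇑(phi x y f) := by
      rw [mem_range_phi hf1]
      rcases hu with h0 | h0
      · exact absurd h0 (toL_ne_nil u)
      · exact h0
    refine ⟨hu', ?_⟩
    have hsv' : toL s ++ toL v ∈ Lang x y f := by
      rw [hq]
      simpa using hsv
    obtain ⟨ns, hne, h1, heq⟩ := hsl
    rw [heq] at hsv'
    rw [mem_range_phi hf1]
    rcases drop_prefix_aux hxy hf1 ns hne h1 (toL v) hsv' with h0 | h0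
    · exact absurd h0 (toL_ne_nil v)
    · exact h0
  · rintro ⟨hu, hv⟩
    exact range_phi_mul (range_phi_mul hu hs) hv

section Proj

variable (k : Type*) [CommRing k] {X : Type*} (x y : X) (f : ℕ → ℕ)

/-- Projection of the semigroup algebra onto the span of monomials from `Set.range (phi x y f)`,
killing all other monomials. -/
noncomputable def proj : MonoidAlgebra k (FreeSemigroup X) →+ MonoidAlgebra k (FreeSemigroup X) :=
  haveI : DecidablePred (· ∈ Set.range ⇑(phi x y f)) := Classical.decPred _
  (MonoidAlgebra.coeffAddEquiv.symm.toAddMonoidHom).comp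
    ((Finsupp.filterAddHom (· ∈ Set.range ⇑(phi x y f))).comp
      MonoidAlgebra.coeffAddEquiv.toAddMonoidHom)

variable {k x y f}

lemma proj_eq_self {z : MonoidAlgebra k (FreeSemigroup X)}
    (h : ∀ g ∈ z.coeff.support, g ∈ Set.range ⇑(phi x y f)) : proj k x y f z = z := by
  classical
  show MonoidAlgebra.ofCoeff (Finsupp.filter _ z.coeff) = _
  rw [← MonoidAlgebra.coeff_inj, MonoidAlgebra.coeff_ofCoeff, Finsupp.filter_eq_self_iff]
  intro g hg
  exact h g (Finsupp.mem_support_iff.2 hg)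

lemma proj_eq_zero {z : MonoidAlgebra k (FreeSemigroup X)}
    (h : ∀ g ∈ z.coeff.support, g ∉ Set.range ⇑(phi x y f)) : proj k x y f z = 0 := by
  classical
  show MonoidAlgebra.ofCoeff (Finsupp.filter _ z.coeff) = _
  rw [← MonoidAlgebra.coeff_eq_zero, MonoidAlgebra.coeff_ofCoeff, Finsupp.filter_eq_zero_iff]
  intro g hg
  by_contra hne
  exact h g (Finsupp.mem_support_iff.2 hne) hg

lemma supp_mul_single_left {u : FreeSemigroup X} {c : k}
    {z : MonoidAlgebra k (FreeSemigroup X)} {g : FreeSemigroup X}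
    (hg : g ∈ (MonoidAlgebra.single u c * z).coeff.support) : ∃ s ∈ z.coeff.support, g = u * s := by
  classical
  have h1 := MonoidAlgebra.support_coeff_mul_subset (MonoidAlgebra.single u c) z hg
  rw [Finset.mem_mul] at h1
  obtain ⟨a, ha, b, hb, rfl⟩ := h1
  have : a = u := by
    have := Finsupp.support_single_subset ha
    simpa using this
  exact ⟨b, hb, by rw [this]⟩

lemma supp_mul_single_right {v : FreeSemigroup X} {c : k}
    {z : MonoidAlgebra k (FreeSemigroup X)} {g : FreeSemigroup X}
    (hg : g ∈ (z * MonoidAlgebra.single v c).coeff.support) : ∃ s ∈ z.coeff.support, g = s * v := by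
  classical
  have h1 := MonoidAlgebra.support_coeff_mul_subset z (MonoidAlgebra.single v c) hg
  rw [Finset.mem_mul] at h1
  obtain ⟨a, ha, b, hb, rfl⟩ := h1
  have : b = v := by
    have := Finsupp.support_single_subset hb
    simpa using this
  exact ⟨a, ha, by rw [this]⟩

lemma supp_mul_single_both {u v : FreeSemigroup X} {c c' : k}
    {z : MonoidAlgebra k (FreeSemigroup X)} {g : FreeSemigroup X}
    (hg : g ∈ (MonoidAlgebra.single u c * z * MonoidAlgebra.single v c').coeff.support) :
    ∃ s ∈ z.coeff.support, g = u * s * v := by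
  obtain ⟨a, ha, rfl⟩ := supp_mul_single_right hg
  obtain ⟨s, hs, rfl⟩ := supp_mul_single_left ha
  exact ⟨s, hs, rfl⟩

end Proj

section Range

variable {k : Type*} [CommRing k] {X : Type*} {x y : X} {f : ℕ → ℕ}

lemma malcevHom_eq : malcevHom k x y f = MonoidAlgebra.mapDomain ⇑(phi x y f) := rfl

lemma single_phi_mem (g : FreeSemigroup {n : ℕ // 1 ≤ n}) (c : k) :
    MonoidAlgebra.single (phi x y f g) c ∈ malcevSubalgebra k x y f := by
  induction g using FreeSemigroup.recOnMul generalizing c with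
  | ih1 p =>
      have h1 : phi x y f (FreeSemigroup.of p) = malcevWord x y f p.1 := rfl
      rw [h1, show (c : k) = c * 1 by rw [mul_one], ← MonoidAlgebra.smul_single']
      exact SMulMemClass.smul_mem c
        (NonUnitalAlgebra.subset_adjoin k ⟨p.1, p.2, rfl⟩)
  | ih2 p g hp hg =>
      rw [map_mul, ← mul_one c, ← MonoidAlgebra.single_mul_single]
      exact mul_mem (hp c) (hg 1)

lemma range_malcevHom :
    Set.range (malcevHom k x y f)
      = (malcevSubalgebra k x y f : Set (MonoidAlgebra k (FreeSemigroup X))) := by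
  apply subset_antisymm
  · rintro _ ⟨z, rfl⟩
    rw [malcevHom_eq]
    have : ∀ z : MonoidAlgebra k (FreeSemigroup {n : ℕ // 1 ≤ n}),
        MonoidAlgebra.mapDomain ⇑(phi x y f) z ∈ malcevSubalgebra k x y f := by
      intro z
      induction z using MonoidAlgebra.induction with
      | zero => rw [MonoidAlgebra.mapDomain_zero]; exact zero_mem _
      | single_add g c w hg hc ih =>
          rw [MonoidAlgebra.mapDomain_add, MonoidAlgebra.mapDomain_single]
          exact add_mem (single_phi_mem g c) ih
    exact this z
  · intro z hz
    rw [SetLike.mem_coe] at hz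
    induction hz using NonUnitalAlgebra.adjoin_induction with
    | mem m hm =>
        obtain ⟨n, hn, rfl⟩ := hm
        exact ⟨MonoidAlgebra.single (FreeSemigroup.of (⟨n, hn⟩ : {n : ℕ // 1 ≤ n})) 1,
          by rw [malcevHom_eq, MonoidAlgebra.mapDomain_single]; rfl⟩
    | add a b _ _ ha hb =>
        obtain ⟨za, rfl⟩ := ha
        obtain ⟨zb, rfl⟩ := hb
        exact ⟨za + zb, by rw [malcevHom_eq, MonoidAlgebra.mapDomain_add]⟩
    | zero => exact ⟨0, by rw [malcevHom_eq, MonoidAlgebra.mapDomain_zero]⟩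
    | mul a b _ _ ha hb =>
        obtain ⟨za, rfl⟩ := ha
        obtain ⟨zb, rfl⟩ := hb
        exact ⟨za * zb, by rw [malcevHom_eq]; exact MonoidAlgebra.mapDomain_mul (phi x y f) za zb⟩
    | smul r a _ ha =>
        obtain ⟨za, rfl⟩ := ha
        exact ⟨r • za, by rw [malcevHom_eq, MonoidAlgebra.mapDomain_smul]⟩

lemma support_subset_of_mem {z : MonoidAlgebra k (FreeSemigroup X)}
    (hz : z ∈ malcevSubalgebra k x y f) :
    ∀ g ∈ z.coeff.support, g ∈ Set.range ⇑(phi x y f) := by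
  classical
  have hz' : z ∈ Set.range (malcevHom k x y f) := by
    rw [range_malcevHom]
    exact hz
  obtain ⟨w, rfl⟩ := hz'
  intro g hg
  rw [malcevHom_eq] at hg
  obtain ⟨a, _, rfl⟩ := Finset.mem_image.1 (Finsupp.mapDomain_support hg)
  exact ⟨a, rfl⟩

lemma single_mem_of_mem_range {u : FreeSemigroup X} (hu : u ∈ Set.range ⇑(phi x y f)) (c : k) :
    MonoidAlgebra.single u c ∈ malcevSubalgebra k x y f := by
  obtain ⟨g, rfl⟩ := hu
  exact single_phi_mem g c

end Range

end MalcevAux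

open MalcevAux

/-- Let `B` be the free nonunital associative `k`-algebra on two
generators `x ≠ y`, and `A ⊆ B` the nonunital subalgebra generated by the monomials
`x * yⁿ * x^(f n)`, `n ≥ 1`, where `f` maps positive integers to positive integers.
Then `A` is free on this family of monomials (the natural homomorphism from the free
nonunital associative `k`-algebra on countably many generators is injective with
image `A`), and `A` has the ideal extension property in `B`. -/
theorem malcev_shirshov_free_and_ideal_extension
    (k : Type*) [CommRing k] (X : Type*) (x y : X) (hxy : x ≠ y)
    (hX : ∀ a : X, a = x ∨ a = y)
    (f : ℕ → ℕ) (hf : ∀ n, 1 ≤ n → 1 ≤ f n) :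
    Function.Injective (malcevHom k x y f) ∧
    Set.range (malcevHom k x y f)
      = (malcevSubalgebra k x y f : Set (MonoidAlgebra k (FreeSemigroup X))) ∧
    ∀ I : TwoSidedIdeal (malcevSubalgebra k x y f),
      ∀ a : malcevSubalgebra k x y f,
        a ∈ I ↔ (a : MonoidAlgebra k (FreeSemigroup X)) ∈
          TwoSidedIdeal.span'
            (Subtype.val '' (I : Set (malcevSubalgebra k x y f))) := by
  classical
  -- injectivity of the underlying semigroup homomorphism
  have hphi_inj : Function.Injective ⇑(phi x y f) := by
    intro a b hab
    apply toL_injective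
    have h1 := congrArg toL hab
    rw [toL_phi hf, toL_phi hf] at h1
    have hcomp : (fun p : {n : ℕ // 1 ≤ n} => codeL x y f p.1)
        = (codeL x y f) ∘ Subtype.val := rfl
    rw [hcomp, ← List.map_map, ← List.map_map] at h1
    have h2 := flatten_inj hxy hf ((toL a).map Subtype.val) ((toL b).map Subtype.val)
      (by rintro n hn; obtain ⟨p, _, rfl⟩ := List.mem_map.1 hn; exact p.2)
      (by rintro n hn; obtain ⟨p, _, rfl⟩ := List.mem_map.1 hn; exact p.2) h1
    exact List.map_injective_iff.2 Subtype.val_injective h2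
  have hinj : Function.Injective (malcevHom k x y f) := by
    rw [malcevHom_eq]
    exact MonoidAlgebra.mapDomain_injective hphi_inj
  refine ⟨hinj, range_malcevHom, ?_⟩
  intro I a
  set S : Set (FreeSemigroup X) := Set.range ⇑(phi x y f) with hS
  set I' : Set (MonoidAlgebra k (FreeSemigroup X)) :=
    Subtype.val '' (I : Set (malcevSubalgebra k x y f)) with hI'
  set π := proj k x y f with hπ
  -- closure properties of I'
  have hI'zero : (0 : MonoidAlgebra k (FreeSemigroup X)) ∈ I' := ⟨0, I.zero_mem, rfl⟩
  have hI'add : ∀ {b c : MonoidAlgebra k (FreeSemigroup X)}, b ∈ I' → c ∈ I' → b + c ∈ I' := by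
    rintro _ _ ⟨b₀, hb, rfl⟩ ⟨c₀, hc, rfl⟩
    exact ⟨b₀ + c₀, I.add_mem hb hc, rfl⟩
  have hI'neg : ∀ {b : MonoidAlgebra k (FreeSemigroup X)}, b ∈ I' → -b ∈ I' := by
    rintro _ ⟨b₀, hb, rfl⟩
    exact ⟨-b₀, I.neg_mem hb, rfl⟩
  have hI'supp : ∀ {b : MonoidAlgebra k (FreeSemigroup X)}, b ∈ I' →
      ∀ g ∈ b.coeff.support, g ∈ S := by
    rintro _ ⟨b₀, _, rfl⟩
    exact support_subset_of_mem b₀.2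
  have hI'mulL : ∀ {b : MonoidAlgebra k (FreeSemigroup X)}, b ∈ I' →
      ∀ {u : FreeSemigroup X}, u ∈ S → ∀ c : k, MonoidAlgebra.single u c * b ∈ I' := by
    rintro _ ⟨b₀, hb, rfl⟩ u hu c
    have hm := I.mul_mem_left ⟨MonoidAlgebra.single u c, single_mem_of_mem_range hu c⟩ b₀ hb
    exact ⟨_, hm, MulMemClass.coe_mul _ _ _⟩
  have hI'mulR : ∀ {b : MonoidAlgebra k (FreeSemigroup X)}, b ∈ I' →
      ∀ {v : FreeSemigroup X}, v ∈ S → ∀ c : k, b * MonoidAlgebra.single v c ∈ I' := by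
    rintro _ ⟨b₀, hb, rfl⟩ v hv c
    have hm := I.mul_mem_right b₀ ⟨MonoidAlgebra.single v c, single_mem_of_mem_range hv c⟩ hb
    exact ⟨_, hm, MulMemClass.coe_mul _ _ _⟩
  -- projection of products with elements supported on S
  have keepL : ∀ {b : MonoidAlgebra k (FreeSemigroup X)}, (∀ g ∈ b.coeff.support, g ∈ S) →
      ∀ {u : FreeSemigroup X}, u ∈ S → ∀ c : k,
        π (MonoidAlgebra.single u c * b) = MonoidAlgebra.single u c * b := by
    intro b hb u hu c
    refine proj_eq_self fun g hg => ?_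
    obtain ⟨s, hs, rfl⟩ := supp_mul_single_left hg
    exact range_phi_mul hu (hb s hs)
  have killL : ∀ {b : MonoidAlgebra k (FreeSemigroup X)}, (∀ g ∈ b.coeff.support, g ∈ S) →
      ∀ {u : FreeSemigroup X}, u ∉ S → ∀ c : k,
        π (MonoidAlgebra.single u c * b) = 0 := by
    intro b hb u hu c
    refine proj_eq_zero fun g hg => ?_
    obtain ⟨s, hs, rfl⟩ := supp_mul_single_left hg
    exact fun hmem => hu ((mul_left_mem hxy hf (hb s hs) u).1 hmem)
  have keepR : ∀ {b : MonoidAlgebra k (FreeSemigroup X)}, (∀ g ∈ b.coeff.support, g ∈ S) →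
      ∀ {v : FreeSemigroup X}, v ∈ S → ∀ c : k,
        π (b * MonoidAlgebra.single v c) = b * MonoidAlgebra.single v c := by
    intro b hb v hv c
    refine proj_eq_self fun g hg => ?_
    obtain ⟨s, hs, rfl⟩ := supp_mul_single_right hg
    exact range_phi_mul (hb s hs) hv
  have killR : ∀ {b : MonoidAlgebra k (FreeSemigroup X)}, (∀ g ∈ b.coeff.support, g ∈ S) →
      ∀ {v : FreeSemigroup X}, v ∉ S → ∀ c : k,
        π (b * MonoidAlgebra.single v c) = 0 := by
    intro b hb v hv c
    refine proj_eq_zero fun g hg => ?_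
    obtain ⟨s, hs, rfl⟩ := supp_mul_single_right hg
    exact fun hmem => hv ((mul_right_mem hxy hf (hb s hs) v).1 hmem)
  have killB : ∀ {b : MonoidAlgebra k (FreeSemigroup X)}, (∀ g ∈ b.coeff.support, g ∈ S) →
      ∀ {u v : FreeSemigroup X}, ¬(u ∈ S ∧ v ∈ S) → ∀ c c' : k,
        π (MonoidAlgebra.single u c * b * MonoidAlgebra.single v c') = 0 := by
    intro b hb u v huv c c'
    refine proj_eq_zero fun g hg => ?_
    obtain ⟨s, hs, rfl⟩ := supp_mul_single_both hg
    exact fun hmem => huv ((mul_mid_mem hxy hf (hb s hs) u v).1 hmem)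
  -- the carrier of the big ideal
  set Kc : Set (MonoidAlgebra k (FreeSemigroup X)) :=
    {z | π z ∈ I' ∧ (∀ u c, π (MonoidAlgebra.single u c * z) ∈ I') ∧
      (∀ v c, π (z * MonoidAlgebra.single v c) ∈ I') ∧
      (∀ u c v c', π (MonoidAlgebra.single u c * z * MonoidAlgebra.single v c') ∈ I')}
    with hKc
  have hKzero : (0 : MonoidAlgebra k (FreeSemigroup X)) ∈ Kc := by
    refine ⟨by rw [map_zero]; exact hI'zero, fun u c => ?_, fun v c => ?_, fun u c v c' => ?_⟩
    · rw [mul_zero, map_zero]; exact hI'zero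
    · rw [zero_mul, map_zero]; exact hI'zero
    · rw [mul_zero, zero_mul, map_zero]; exact hI'zero
  have hKadd : ∀ {z w : MonoidAlgebra k (FreeSemigroup X)}, z ∈ Kc → w ∈ Kc → z + w ∈ Kc := by
    intro z w hz hw
    obtain ⟨hz1, hz2, hz3, hz4⟩ := hz
    obtain ⟨hw1, hw2, hw3, hw4⟩ := hw
    refine ⟨?_, fun u c => ?_, fun v c => ?_, fun u c v c' => ?_⟩
    · rw [map_add]; exact hI'add hz1 hw1
    · rw [mul_add, map_add]; exact hI'add (hz2 u c) (hw2 u c)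
    · rw [add_mul, map_add]; exact hI'add (hz3 v c) (hw3 v c)
    · rw [mul_add, add_mul, map_add]; exact hI'add (hz4 u c v c') (hw4 u c v c')
  have hKneg : ∀ {z : MonoidAlgebra k (FreeSemigroup X)}, z ∈ Kc → -z ∈ Kc := by
    intro z hz
    obtain ⟨hz1, hz2, hz3, hz4⟩ := hz
    refine ⟨?_, fun u c => ?_, fun v c => ?_, fun u c v c' => ?_⟩
    · rw [map_neg]; exact hI'neg hz1
    · rw [mul_neg, map_neg]; exact hI'neg (hz2 u c)
    · rw [neg_mul, map_neg]; exact hI'neg (hz3 v c)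
    · rw [mul_neg, neg_mul, map_neg]; exact hI'neg (hz4 u c v c')
  have hKmulL : ∀ {b z : MonoidAlgebra k (FreeSemigroup X)}, z ∈ Kc → b * z ∈ Kc := by
    intro b z hz
    obtain ⟨hz1, hz2, hz3, hz4⟩ := hz
    have L : ∀ b' : MonoidAlgebra k (FreeSemigroup X), π (b' * z) ∈ I' := by
      intro b'
      induction b' using MonoidAlgebra.induction with
      | zero => rw [zero_mul, map_zero]; exact hI'zero
      | single_add u c w hu hc ih =>
          rw [add_mul, map_add]
          exact hI'add (hz2 u c) ih
    have M : ∀ (b' : MonoidAlgebra k (FreeSemigroup X)) (v : FreeSemigroup X) (c : k),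
        π (b' * z * MonoidAlgebra.single v c) ∈ I' := by
      intro b' v c
      induction b' using MonoidAlgebra.induction with
      | zero => rw [zero_mul, zero_mul, map_zero]; exact hI'zero
      | single_add u c'' w hu hc ih =>
          rw [add_mul, add_mul, map_add]
          exact hI'add (hz4 u c'' v c) ih
    refine ⟨L b, fun u c => ?_, fun v c => ?_, fun u c v c' => ?_⟩
    · rw [← mul_assoc]; exact L _
    · exact M b v c
    · rw [← mul_assoc]; exact M _ v c'
  have hKmulR : ∀ {z b : MonoidAlgebra k (FreeSemigroup X)}, z ∈ Kc → z * b ∈ Kc := by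
    intro z b hz
    obtain ⟨hz1, hz2, hz3, hz4⟩ := hz
    have R : ∀ b' : MonoidAlgebra k (FreeSemigroup X), π (z * b') ∈ I' := by
      intro b'
      induction b' using MonoidAlgebra.induction with
      | zero => rw [mul_zero, map_zero]; exact hI'zero
      | single_add v c w hv hc ih =>
          rw [mul_add, map_add]
          exact hI'add (hz3 v c) ih
    have M' : ∀ (u : FreeSemigroup X) (c : k) (b' : MonoidAlgebra k (FreeSemigroup X)),
        π (MonoidAlgebra.single u c * z * b') ∈ I' := by
      intro u c b'
      induction b' using MonoidAlgebra.induction with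
      | zero => rw [mul_zero, map_zero]; exact hI'zero
      | single_add v c'' w hv hc ih =>
          rw [mul_add, map_add]
          exact hI'add (hz4 u c v c'') ih
    refine ⟨R b, fun u c => ?_, fun v c => ?_, fun u c v c' => ?_⟩
    · rw [← mul_assoc]; exact M' u c b
    · rw [mul_assoc]; exact R _
    · rw [← mul_assoc, mul_assoc (MonoidAlgebra.single u c * z)]
      exact M' u c _
  set K : TwoSidedIdeal (MonoidAlgebra k (FreeSemigroup X)) :=
    TwoSidedIdeal.mk' Kc hKzero hKadd hKneg (fun {b z} hz => hKmulL hz)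
      (fun {z b} hz => hKmulR hz) with hK
  have hI'K : I' ⊆ Kc := by
    intro b hb
    have hbsupp := hI'supp hb
    refine ⟨?_, fun u c => ?_, fun v c => ?_, fun u c v c' => ?_⟩
    · rw [proj_eq_self hbsupp]; exact hb
    · by_cases hu : u ∈ S
      · rw [keepL hbsupp hu c]; exact hI'mulL hb hu c
      · rw [killL hbsupp hu c]; exact hI'zero
    · by_cases hv : v ∈ S
      · rw [keepR hbsupp hv c]; exact hI'mulR hb hv c
      · rw [killR hbsupp hv c]; exact hI'zero
    · by_cases huv : u ∈ S ∧ v ∈ S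
      · have h1 : π (MonoidAlgebra.single u c * b * MonoidAlgebra.single v c')
            = MonoidAlgebra.single u c * b * MonoidAlgebra.single v c' := by
          refine proj_eq_self fun g hg => ?_
          obtain ⟨s, hs, rfl⟩ := supp_mul_single_both hg
          exact (mul_mid_mem hxy hf (hbsupp s hs) u v).2 huv
        rw [h1]
        exact hI'mulR (hI'mulL hb huv.1 c) huv.2 c'
      · rw [killB hbsupp huv c c']; exact hI'zero
  -- conclusion
  constructor
  · intro ha
    exact (TwoSidedIdeal.mem_sInf _).2 fun J hJ => hJ ⟨a, ha, rfl⟩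
  · intro ha
    have hle : TwoSidedIdeal.span' I' ≤ K := sInf_le (by
      intro b hb
      rw [hK, SetLike.mem_coe, TwoSidedIdeal.mem_mk']
      exact hI'K hb)
    have haK : (a : MonoidAlgebra k (FreeSemigroup X)) ∈ K :=
      (TwoSidedIdeal.le_iff.1 hle) ha
    rw [hK, TwoSidedIdeal.mem_mk'] at haK
    have h1 := haK.1
    rw [proj_eq_self (support_subset_of_mem a.2)] at h1
    obtain ⟨b, hb, hba⟩ := h1
    rwa [show a = b from Subtype.ext hba.symm]
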